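/- Let f : ℝⁿ → ℝ, x ∈ ℝⁿ, Δ > 0, η₁ ∈ (0,1), and let m(s) = f(x) + gᵀs + (1/2) sᵀ H s be a quadratic model with g ∈ ℝⁿ, H symmetric, ‖H‖₂ ≤ H_max for some H_max > 0. Assume m is fully linear: |f(x+s) − m(s)| ≤ κ_f Δ² and ‖∇f(x+s) − ∇m(s)‖₂ ≤ κ_g Δ for all ‖s‖₂ ≤ Δ, with κ_f, κ_g > 0. Let s_k satisfy ‖s_k‖₂ ≤ Δ and the Cauchy decrease condition pred := m(0) − m(s_k) ≥ (1/2)‖g‖₂ min{Δ, ‖g‖₂/‖H‖₂} (with ‖g‖₂/‖H‖₂ := +∞ when H = 0). Fix ε ∈ (0,1]. If ‖∇f(x)‖₂ ≥ ε and Δ ≤ min{ε/(2κ_g), ε/(2H_max), (1−η₁)ε/(4κ_f), 1}, then pred > 0 and ρ := (f(x) − f(x + s_k)) / pred ≥ η₁. -/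

import Mathlib

open Matrix
open scoped Matrix.Norms.L2Operator RealInnerProductSpace

theorem stmt16 (n : ℕ) (f : EuclideanSpace ℝ (Fin n) → ℝ)
    (x : EuclideanSpace ℝ (Fin n)) (Δ : ℝ) (hΔ : 0 < Δ)
    (η₁ : ℝ) (hη₁ : η₁ ∈ Set.Ioo (0 : ℝ) 1)
    (g : EuclideanSpace ℝ (Fin n)) (H : Matrix (Fin n) (Fin n) ℝ) (hH : H.IsSymm)
    (Hmax : ℝ) (hHmax : 0 < Hmax) (hHb : ‖H‖ ≤ Hmax)
    (m : EuclideanSpace ℝ (Fin n) → ℝ)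
    (hm : m = fun s => f x + ⟪g, s⟫ + (1 / 2) * ⟪s, Matrix.toEuclideanLin H s⟫)
    (κf κg : ℝ) (hκf : 0 < κf) (hκg : 0 < κg)
    (hfl1 : ∀ s : EuclideanSpace ℝ (Fin n), ‖s‖ ≤ Δ → |f (x + s) - m s| ≤ κf * Δ ^ 2)
    (hfl2 : ∀ s : EuclideanSpace ℝ (Fin n), ‖s‖ ≤ Δ →
      ‖gradient f (x + s) - (g + Matrix.toEuclideanLin H s)‖ ≤ κg * Δ)
    (sk : EuclideanSpace ℝ (Fin n)) (hsk : ‖sk‖ ≤ Δ)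
    (hcauchy : (1 / 2) * ‖g‖ * (if H = 0 then Δ else min Δ (‖g‖ / ‖H‖)) ≤ m 0 - m sk)
    (ε : ℝ) (hε : ε ∈ Set.Ioc (0 : ℝ) 1)
    (hgrad : ε ≤ ‖gradient f x‖)
    (hΔsmall : Δ ≤ min (min (ε / (2 * κg)) (ε / (2 * Hmax)))
      (min ((1 - η₁) * ε / (4 * κf)) 1)) :
    0 < m 0 - m sk ∧ η₁ ≤ (f x - f (x + sk)) / (m 0 - m sk) := by
  obtain ⟨hε0, hε1⟩ := hε
  obtain ⟨hη0, hη1⟩ := hη₁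
  have hΔ1 : Δ ≤ ε / (2 * κg) := le_trans hΔsmall (le_trans (min_le_left _ _) (min_le_left _ _))
  have hΔ2 : Δ ≤ ε / (2 * Hmax) := le_trans hΔsmall (le_trans (min_le_left _ _) (min_le_right _ _))
  have hΔ3 : Δ ≤ (1 - η₁) * ε / (4 * κf) :=
    le_trans hΔsmall (le_trans (min_le_right _ _) (min_le_left _ _))
  -- m 0 = f x
  have hm0 : m 0 = f x := by simp [hm]
  -- gradient bound at 0
  have hg0 : ‖gradient f x - g‖ ≤ κg * Δ := by
    have := hfl2 0 (by simp [hΔ.le])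
    simpa using this
  have hκgΔ : κg * Δ ≤ ε / 2 := by
    rw [le_div_iff₀ (by positivity)] at hΔ1
    nlinarith
  -- ‖g‖ ≥ ε/2
  have hgε : ε / 2 ≤ ‖g‖ := by
    have h1 : ‖gradient f x‖ ≤ ‖g‖ + ‖gradient f x - g‖ := by
      have he : g + (gradient f x - g) = gradient f x := by abel
      calc ‖gradient f x‖ = ‖g + (gradient f x - g)‖ := by rw [he]
        _ ≤ ‖g‖ + ‖gradient f x - g‖ := norm_add_le _ _
    linarith
  -- pred lower bound
  have hpred : ε * Δ / 4 ≤ m 0 - m sk := by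
    have hfac : Δ ≤ (if H = 0 then Δ else min Δ (‖g‖ / ‖H‖)) := by
      split_ifs with h
      · exact le_refl _
      · have hHpos : (0:ℝ) < ‖H‖ := norm_pos_iff.mpr h
        refine le_min (le_refl _) ?_
        calc Δ ≤ ε / (2 * Hmax) := hΔ2
          _ ≤ (ε / 2) / ‖H‖ := by
            rw [div_le_div_iff₀ (by positivity) hHpos]; nlinarith
          _ ≤ ‖g‖ / ‖H‖ := by gcongr
    calc ε * Δ / 4 = (1/2) * (ε/2) * Δ := by ring
      _ ≤ (1/2) * ‖g‖ * (if H = 0 then Δ else min Δ (‖g‖ / ‖H‖)) := by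
          apply mul_le_mul (by nlinarith) hfac hΔ.le (by positivity)
      _ ≤ m 0 - m sk := hcauchy
  have hpredpos : 0 < m 0 - m sk := lt_of_lt_of_le (by positivity) hpred
  refine ⟨hpredpos, ?_⟩
  -- error bound
  have herr : f (x + sk) - m sk ≤ κf * Δ ^ 2 := le_trans (le_abs_self _) (hfl1 sk hsk)
  have hkfΔ : κf * Δ ^ 2 ≤ (1 - η₁) * (ε * Δ / 4) := by
    rw [le_div_iff₀ (by positivity)] at hΔ3
    nlinarith
  have hkey : η₁ * (m 0 - m sk) ≤ f x - f (x + sk) := by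
    have h1 : κf * Δ ^ 2 ≤ (1 - η₁) * (m 0 - m sk) := by
      refine le_trans hkfΔ ?_
      apply mul_le_mul_of_nonneg_left hpred (by linarith)
    have h2 : f x - f (x + sk) = (m 0 - m sk) - (f (x + sk) - m sk) := by
      rw [hm0]; ring
    linarith
  rw [le_div_iff₀ hpredpos]
  linarith
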